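/- Let A be a commutative ring and V, W finitely generated projective A-modules. Then the second cross-effect of the Schur functor L^3_1 (defined by the short exact sequence 0 → L^3_1(V) → V ⊗ Sym^2(V) → Sym^3(V) → 0) satisfies cr_2(L^3_1)(V,W) ≅ (V ⊗ V ⊗ W) ⊕ (V ⊗ W ⊗ W). -/

import Mathlib

open TensorProduct

open TensorProduct

section SymLib
variable (R : Type*) [CommRing R]

/-- Relations defining the second symmetric power. -/
def sq2 (M : Type*) [AddCommGroup M] [Module R M] : Submodule R (M ⊗[R] M) :=
  Submodule.span R {x | ∃ a b : M, x = a ⊗ₜ[R] b - b ⊗ₜ[R] a}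

/-- The second symmetric power. -/
abbrev SymSq (M : Type*) [AddCommGroup M] [Module R M] := (M ⊗[R] M) ⧸ sq2 R M

/-- Relations defining the third symmetric power. -/
def sq3 (M : Type*) [AddCommGroup M] [Module R M] : Submodule R (M ⊗[R] (M ⊗[R] M)) :=
  Submodule.span R
    ({x | ∃ a b c : M, x = a ⊗ₜ[R] (b ⊗ₜ[R] c) - b ⊗ₜ[R] (a ⊗ₜ[R] c)} ∪
     {x | ∃ a b c : M, x = a ⊗ₜ[R] (b ⊗ₜ[R] c) - a ⊗ₜ[R] (c ⊗ₜ[R] b)})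

/-- The third symmetric power. -/
abbrev SymCube (M : Type*) [AddCommGroup M] [Module R M] := (M ⊗[R] (M ⊗[R] M)) ⧸ sq3 R M

variable {M N : Type*} [AddCommGroup M] [Module R M] [AddCommGroup N] [Module R N]

/-- Multiplication by `v` as a map `Sym² M → Sym³ M`. -/
noncomputable def symMulAux (v : M) : SymSq R M →ₗ[R] SymCube R M :=
  Submodule.liftQ _ ((sq3 R M).mkQ ∘ₗ TensorProduct.mk R M (M ⊗[R] M) v) (by
    rw [sq2, Submodule.span_le]
    rintro x ⟨a, b, rfl⟩
    simp only [SetLike.mem_coe, LinearMap.mem_ker, LinearMap.comp_apply,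
      TensorProduct.mk_apply, map_sub, tmul_sub]
    rw [← map_sub, Submodule.mkQ_apply, Submodule.Quotient.mk_eq_zero]
    exact Submodule.subset_span (Or.inr ⟨v, a, b, rfl⟩))

lemma symMulAux_mk (v : M) (x : M ⊗[R] M) :
    symMulAux R v (Submodule.Quotient.mk x) = Submodule.Quotient.mk (v ⊗ₜ[R] x) := rfl

/-- The multiplication `M ⊗ Sym² M → Sym³ M` as a bilinear map. -/
noncomputable def symMulBil : M →ₗ[R] SymSq R M →ₗ[R] SymCube R M where
  toFun := symMulAux R
  map_add' v w := by
    refine LinearMap.ext fun x => ?_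
    obtain ⟨y, rfl⟩ := Submodule.Quotient.mk_surjective _ x
    simp [symMulAux_mk, add_tmul, Submodule.Quotient.mk_add]
  map_smul' r v := by
    refine LinearMap.ext fun x => ?_
    obtain ⟨y, rfl⟩ := Submodule.Quotient.mk_surjective _ x
    simp only [symMulAux_mk, RingHom.id_apply, LinearMap.smul_apply]
    rw [← Submodule.Quotient.mk_smul, smul_tmul']

/-- The multiplication map `M ⊗ Sym² M → Sym³ M`. -/
noncomputable def symMul : M ⊗[R] SymSq R M →ₗ[R] SymCube R M :=
  TensorProduct.lift (symMulBil R)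

lemma symMul_tmul (v : M) (x : M ⊗[R] M) :
    symMul R (v ⊗ₜ[R] (Submodule.Quotient.mk x)) = Submodule.Quotient.mk (v ⊗ₜ[R] x) := rfl

/-- The Schur functor `L³₁`, the kernel of the multiplication `M ⊗ Sym² M → Sym³ M`. -/
noncomputable def SchurL31 : Submodule R (M ⊗[R] SymSq R M) := LinearMap.ker (symMul R)

variable {R}

/-- Functoriality of `Sym²`. -/
noncomputable def symSqMap (f : M →ₗ[R] N) : SymSq R M →ₗ[R] SymSq R N :=
  Submodule.mapQ _ _ (TensorProduct.map f f) (by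
    rw [sq2, Submodule.span_le]
    rintro x ⟨a, b, rfl⟩
    simp only [SetLike.mem_coe, Submodule.mem_comap, map_sub, TensorProduct.map_tmul]
    exact Submodule.subset_span ⟨f a, f b, rfl⟩)

/-- Functoriality of `Sym³`. -/
noncomputable def symCubeMap (f : M →ₗ[R] N) : SymCube R M →ₗ[R] SymCube R N :=
  Submodule.mapQ _ _ (TensorProduct.map f (TensorProduct.map f f)) (by
    rw [sq3, Submodule.span_le]
    rintro x (⟨a, b, c, rfl⟩ | ⟨a, b, c, rfl⟩) <;>
      simp only [SetLike.mem_coe, Submodule.mem_comap, map_sub, TensorProduct.map_tmul]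
    · exact Submodule.subset_span (Or.inl ⟨f a, f b, f c, rfl⟩)
    · exact Submodule.subset_span (Or.inr ⟨f a, f b, f c, rfl⟩))

end SymLib

section SymLib2
variable {R : Type*} [CommRing R]
variable {M N : Type*} [AddCommGroup M] [Module R M] [AddCommGroup N] [Module R N]

lemma symMul_natural (f : M →ₗ[R] N) :
    symCubeMap f ∘ₗ symMul R = symMul R ∘ₗ TensorProduct.map f (symSqMap f) := by
  apply TensorProduct.ext'
  intro v x
  obtain ⟨y, rfl⟩ := Submodule.Quotient.mk_surjective _ x
  simp only [LinearMap.comp_apply, TensorProduct.map_tmul]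
  rw [symMul_tmul]
  show Submodule.Quotient.mk ((TensorProduct.map f (TensorProduct.map f f)) (v ⊗ₜ[R] y)) = _
  rw [TensorProduct.map_tmul,
    show symSqMap f (Submodule.Quotient.mk y) = Submodule.Quotient.mk (TensorProduct.map f f y) from rfl,
    symMul_tmul]

/-- Functoriality of the Schur functor `L³₁`. -/
noncomputable def schurL31Map (f : M →ₗ[R] N) : SchurL31 (R := R) (M := M) →ₗ[R] SchurL31 (R := R) (M := N) :=
  LinearMap.restrict (TensorProduct.map f (symSqMap f)) (fun x hx => by
    have := congrFun (congrArg DFunLike.coe (symMul_natural f)) x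
    simp only [LinearMap.comp_apply] at this
    simp only [SchurL31, LinearMap.mem_ker] at hx ⊢
    rw [← this, hx, map_zero])

end SymLib2

section CrossEffect
variable {A : Type*} [CommRing A]
variable {M N : Type*} [AddCommGroup M] [Module A M] [AddCommGroup N] [Module A N]

/-- The map induced on `M ⊗ Sym² M` by an endomorphism `p` of `M`;
the Schur functor `L³₁` is a subfunctor of this construction. -/
noncomputable def ambMap (p : M →ₗ[A] M) :
    M ⊗[A] SymSq A M →ₗ[A] M ⊗[A] SymSq A M :=
  TensorProduct.map p (symSqMap p)

end CrossEffect

section Projections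
variable (A V W : Type*) [CommRing A] [AddCommGroup V] [Module A V]
  [AddCommGroup W] [Module A W]

/-- First projection-inclusion endomorphism of `V ⊕ W`. -/
noncomputable def prj1 : V × W →ₗ[A] V × W := (LinearMap.inl A V W) ∘ₗ (LinearMap.fst A V W)

/-- Second projection-inclusion endomorphism of `V ⊕ W`. -/
noncomputable def prj2 : V × W →ₗ[A] V × W := (LinearMap.inr A V W) ∘ₗ (LinearMap.snd A V W)

end Projections

/-- The second cross-effect of the Schur functor `L³₁`:
the image of `L³₁(V ⊕ W)` under the endomorphism `L³₁(p₁+p₂) - L³₁(p₁) - L³₁(p₂)`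
(the Eilenberg–Mac Lane cross-effect). -/
noncomputable def cr2SchurL31 (A V W : Type*) [CommRing A] [AddCommGroup V] [Module A V]
    [AddCommGroup W] [Module A W] :
    Submodule A ((V × W) ⊗[A] SymSq A (V × W)) :=
  Submodule.map (ambMap (prj1 A V W + prj2 A V W)
      - ambMap (prj1 A V W) - ambMap (prj2 A V W))
    (SchurL31 (R := A) (M := V × W))

section Cr2Proof

open LinearMap

lemma mkS_comm {R : Type*} [CommRing R] {M : Type*} [AddCommGroup M] [Module R M] (a b : M) :
    (Submodule.Quotient.mk (a ⊗ₜ[R] b) : SymSq R M) = Submodule.Quotient.mk (b ⊗ₜ[R] a) :=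
  (Submodule.Quotient.eq _).2 (Submodule.subset_span ⟨a, b, rfl⟩)

lemma mk3_swap12 {R : Type*} [CommRing R] {M : Type*} [AddCommGroup M] [Module R M] (a b c : M) :
    (Submodule.Quotient.mk (a ⊗ₜ[R] (b ⊗ₜ[R] c)) : SymCube R M) =
      Submodule.Quotient.mk (b ⊗ₜ[R] (a ⊗ₜ[R] c)) :=
  (Submodule.Quotient.eq _).2 (Submodule.subset_span (Or.inl ⟨a, b, c, rfl⟩))

lemma mk3_swap23 {R : Type*} [CommRing R] {M : Type*} [AddCommGroup M] [Module R M] (a b c : M) :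
    (Submodule.Quotient.mk (a ⊗ₜ[R] (b ⊗ₜ[R] c)) : SymCube R M) =
      Submodule.Quotient.mk (a ⊗ₜ[R] (c ⊗ₜ[R] b)) :=
  (Submodule.Quotient.eq _).2 (Submodule.subset_span (Or.inr ⟨a, b, c, rfl⟩))

lemma tensor_ext3 {R M N P Q : Type*} [CommRing R] [AddCommGroup M] [Module R M]
    [AddCommGroup N] [Module R N] [AddCommGroup P] [Module R P] [AddCommGroup Q] [Module R Q]
    {f g : M ⊗[R] (N ⊗[R] P) →ₗ[R] Q}
    (h : ∀ a b c, f (a ⊗ₜ[R] (b ⊗ₜ[R] c)) = g (a ⊗ₜ[R] (b ⊗ₜ[R] c))) : f = g := by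
  apply TensorProduct.ext'
  intro a y
  induction y using TensorProduct.induction_on with
  | zero => simp
  | tmul b c => exact h a b c
  | add x y hx hy => rw [tmul_add, map_add, map_add, hx, hy]

variable (A V W : Type*) [CommRing A] [AddCommGroup V] [Module A V]
  [AddCommGroup W] [Module A W]

/-- Quotient map on the last two factors. -/
noncomputable def qMap :
    (V × W) ⊗[A] ((V × W) ⊗[A] (V × W)) →ₗ[A] (V × W) ⊗[A] SymSq A (V × W) :=
  lTensor (V × W) (sq2 A (V × W)).mkQ

lemma qMap_tmul (m : V × W) (y : (V × W) ⊗[A] (V × W)) :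
    qMap A V W (m ⊗ₜ[A] y) = m ⊗ₜ[A] (Submodule.Quotient.mk y : SymSq A (V × W)) := by
  simp [qMap]

/-- `v ⊗ (v' ⊗ w) ↦ w ⊗ (v ⊗ v')`. -/
noncomputable def perm1 : V ⊗[A] (V ⊗[A] W) ≃ₗ[A] W ⊗[A] (V ⊗[A] V) :=
  (TensorProduct.leftComm A V V W).trans <|
    (TensorProduct.congr (LinearEquiv.refl A V) (TensorProduct.comm A V W)).trans <|
      (TensorProduct.leftComm A V W V).trans
        (TensorProduct.congr (LinearEquiv.refl A W) (TensorProduct.comm A V V))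

lemma perm1_tmul (v v' : V) (w : W) :
    perm1 A V W (v ⊗ₜ[A] (v' ⊗ₜ[A] w)) = w ⊗ₜ[A] (v ⊗ₜ[A] v') := by
  simp [perm1]

noncomputable def Phi1 : V ⊗[A] (V ⊗[A] W) →ₗ[A] (V × W) ⊗[A] SymSq A (V × W) :=
  qMap A V W ∘ₗ TensorProduct.map (inl A V W) (TensorProduct.map (inl A V W) (inr A V W))
    - (qMap A V W ∘ₗ TensorProduct.map (inr A V W)
        (TensorProduct.map (inl A V W) (inl A V W))) ∘ₗ (perm1 A V W).toLinearMap

lemma Phi1_tmul (v v' : V) (w : W) :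
    Phi1 A V W (v ⊗ₜ[A] (v' ⊗ₜ[A] w)) =
      ((v, 0) : V × W) ⊗ₜ[A]
          (Submodule.Quotient.mk (((v', 0) : V × W) ⊗ₜ[A] ((0, w) : V × W)))
        - ((0, w) : V × W) ⊗ₜ[A]
          (Submodule.Quotient.mk (((v, 0) : V × W) ⊗ₜ[A] ((v', 0) : V × W))) := by
  simp [Phi1, qMap_tmul, perm1_tmul]

noncomputable def Phi2 : V ⊗[A] (W ⊗[A] W) →ₗ[A] (V × W) ⊗[A] SymSq A (V × W) :=
  qMap A V W ∘ₗ TensorProduct.map (inl A V W) (TensorProduct.map (inr A V W) (inr A V W))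
    - (qMap A V W ∘ₗ TensorProduct.map (inr A V W)
        (TensorProduct.map (inl A V W) (inr A V W))) ∘ₗ (TensorProduct.leftComm A V W W).toLinearMap

lemma Phi2_tmul (v : V) (w w' : W) :
    Phi2 A V W (v ⊗ₜ[A] (w ⊗ₜ[A] w')) =
      ((v, 0) : V × W) ⊗ₜ[A]
          (Submodule.Quotient.mk (((0, w) : V × W) ⊗ₜ[A] ((0, w') : V × W)))
        - ((0, w) : V × W) ⊗ₜ[A]
          (Submodule.Quotient.mk (((v, 0) : V × W) ⊗ₜ[A] ((0, w') : V × W))) := by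
  simp [Phi2, qMap_tmul]

noncomputable def sMap : (V × W) ⊗[A] (V × W) →ₗ[A] V ⊗[A] W :=
  TensorProduct.map (fst A V W) (snd A V W) +
    TensorProduct.map (fst A V W) (snd A V W) ∘ₗ (TensorProduct.comm A (V × W) (V × W)).toLinearMap

lemma sMap_tmul (a b : V × W) : sMap A V W (a ⊗ₜ[A] b) = a.1 ⊗ₜ[A] b.2 + b.1 ⊗ₜ[A] a.2 := by
  simp [sMap]

noncomputable def sBar : SymSq A (V × W) →ₗ[A] V ⊗[A] W :=
  Submodule.liftQ (sq2 A (V × W)) (sMap A V W) (by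
    rw [sq2, Submodule.span_le]
    rintro x ⟨a, b, rfl⟩
    simp only [SetLike.mem_coe, mem_ker, map_sub, sMap_tmul]
    abel)

lemma sBar_mk (y : (V × W) ⊗[A] (V × W)) :
    sBar A V W (Submodule.Quotient.mk y) = sMap A V W y := rfl

noncomputable def Psi1 : (V × W) ⊗[A] SymSq A (V × W) →ₗ[A] V ⊗[A] (V ⊗[A] W) :=
  TensorProduct.map (fst A V W) (sBar A V W)

lemma Psi1_tmul (m a b : V × W) :
    Psi1 A V W (m ⊗ₜ[A] (Submodule.Quotient.mk (a ⊗ₜ[A] b))) =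
      m.1 ⊗ₜ[A] (a.1 ⊗ₜ[A] b.2 + b.1 ⊗ₜ[A] a.2) := by
  simp [Psi1, sBar_mk, sMap_tmul]

noncomputable def psi2Core :
    (V × W) ⊗[A] ((V × W) ⊗[A] (V × W)) →ₗ[A] V ⊗[A] (W ⊗[A] W) :=
  - (TensorProduct.map (fst A V W) (TensorProduct.map (snd A V W) (snd A V W)) ∘ₗ
      (TensorProduct.leftComm A (V × W) (V × W) (V × W)).toLinearMap
    + TensorProduct.map (fst A V W) (TensorProduct.map (snd A V W) (snd A V W)) ∘ₗ
      (TensorProduct.leftComm A (V × W) (V × W) (V × W)).toLinearMap ∘ₗ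
      (TensorProduct.congr (LinearEquiv.refl A (V × W))
        (TensorProduct.comm A (V × W) (V × W))).toLinearMap)

lemma psi2Core_tmul (m a b : V × W) :
    psi2Core A V W (m ⊗ₜ[A] (a ⊗ₜ[A] b)) =
      - (a.1 ⊗ₜ[A] (m.2 ⊗ₜ[A] b.2) + b.1 ⊗ₜ[A] (m.2 ⊗ₜ[A] a.2)) := by
  simp [psi2Core]

noncomputable def psi2Aux (m : V × W) : SymSq A (V × W) →ₗ[A] V ⊗[A] (W ⊗[A] W) :=
  Submodule.liftQ (sq2 A (V × W))
    (psi2Core A V W ∘ₗ TensorProduct.mk A (V × W) ((V × W) ⊗[A] (V × W)) m) (by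
    rw [sq2, Submodule.span_le]
    rintro x ⟨a, b, rfl⟩
    simp only [SetLike.mem_coe, mem_ker, comp_apply, TensorProduct.mk_apply, tmul_sub,
      map_sub, psi2Core_tmul]
    abel)

lemma psi2Aux_mk (m : V × W) (y : (V × W) ⊗[A] (V × W)) :
    psi2Aux A V W m (Submodule.Quotient.mk y) = psi2Core A V W (m ⊗ₜ[A] y) := rfl

noncomputable def psi2Bil : (V × W) →ₗ[A] SymSq A (V × W) →ₗ[A] V ⊗[A] (W ⊗[A] W) where
  toFun := psi2Aux A V W
  map_add' m m' := by
    refine LinearMap.ext fun x => ?_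
    obtain ⟨y, rfl⟩ := Submodule.Quotient.mk_surjective _ x
    simp only [psi2Aux_mk, LinearMap.add_apply]
    rw [add_tmul, map_add]
  map_smul' r m := by
    refine LinearMap.ext fun x => ?_
    obtain ⟨y, rfl⟩ := Submodule.Quotient.mk_surjective _ x
    simp only [psi2Aux_mk, RingHom.id_apply, LinearMap.smul_apply]
    rw [← smul_tmul', map_smul]

noncomputable def Psi2 : (V × W) ⊗[A] SymSq A (V × W) →ₗ[A] V ⊗[A] (W ⊗[A] W) :=
  TensorProduct.lift (psi2Bil A V W)

lemma Psi2_tmul (m : V × W) (y : (V × W) ⊗[A] (V × W)) :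
    Psi2 A V W (m ⊗ₜ[A] (Submodule.Quotient.mk y)) = psi2Core A V W (m ⊗ₜ[A] y) := rfl

noncomputable def thetaBase1 :
    (V × W) ⊗[A] ((V × W) ⊗[A] (V × W)) →ₗ[A] (V × W) ⊗[A] SymSq A (V × W) :=
  qMap A V W ∘ₗ TensorProduct.map (prj2 A V W)
    (TensorProduct.map (prj1 A V W) (prj1 A V W))

noncomputable def thetaBase2 :
    (V × W) ⊗[A] ((V × W) ⊗[A] (V × W)) →ₗ[A] (V × W) ⊗[A] SymSq A (V × W) :=
  qMap A V W ∘ₗ TensorProduct.map (prj1 A V W)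
    (TensorProduct.map (prj2 A V W) (prj2 A V W))

noncomputable def rot2 :
    (V × W) ⊗[A] ((V × W) ⊗[A] (V × W)) →ₗ[A] (V × W) ⊗[A] ((V × W) ⊗[A] (V × W)) :=
  (TensorProduct.leftComm A (V × W) (V × W) (V × W)).toLinearMap

noncomputable def rot3 :
    (V × W) ⊗[A] ((V × W) ⊗[A] (V × W)) →ₗ[A] (V × W) ⊗[A] ((V × W) ⊗[A] (V × W)) :=
  rot2 A V W ∘ₗ (TensorProduct.congr (LinearEquiv.refl A (V × W))
    (TensorProduct.comm A (V × W) (V × W))).toLinearMap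

noncomputable def thetaCore :
    (V × W) ⊗[A] ((V × W) ⊗[A] (V × W)) →ₗ[A] (V × W) ⊗[A] SymSq A (V × W) :=
  thetaBase1 A V W + thetaBase1 A V W ∘ₗ rot2 A V W + thetaBase1 A V W ∘ₗ rot3 A V W
    + thetaBase2 A V W + thetaBase2 A V W ∘ₗ rot2 A V W + thetaBase2 A V W ∘ₗ rot3 A V W

lemma thetaCore_tmul (m₁ m₂ m₃ : V × W) :
    thetaCore A V W (m₁ ⊗ₜ[A] (m₂ ⊗ₜ[A] m₃)) =
      ((0, m₁.2) : V × W) ⊗ₜ[A]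
          (Submodule.Quotient.mk (((m₂.1, 0) : V × W) ⊗ₜ[A] ((m₃.1, 0) : V × W)))
        + ((0, m₂.2) : V × W) ⊗ₜ[A]
          (Submodule.Quotient.mk (((m₁.1, 0) : V × W) ⊗ₜ[A] ((m₃.1, 0) : V × W)))
        + ((0, m₃.2) : V × W) ⊗ₜ[A]
          (Submodule.Quotient.mk (((m₁.1, 0) : V × W) ⊗ₜ[A] ((m₂.1, 0) : V × W)))
        + ((m₁.1, 0) : V × W) ⊗ₜ[A]
          (Submodule.Quotient.mk (((0, m₂.2) : V × W) ⊗ₜ[A] ((0, m₃.2) : V × W)))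
        + ((m₂.1, 0) : V × W) ⊗ₜ[A]
          (Submodule.Quotient.mk (((0, m₁.2) : V × W) ⊗ₜ[A] ((0, m₃.2) : V × W)))
        + ((m₃.1, 0) : V × W) ⊗ₜ[A]
          (Submodule.Quotient.mk (((0, m₁.2) : V × W) ⊗ₜ[A] ((0, m₂.2) : V × W))) := by
  simp [thetaCore, thetaBase1, thetaBase2, rot2, rot3, qMap_tmul, prj1, prj2]

lemma thetaCore_ker : sq3 A (V × W) ≤ ker (thetaCore A V W) := by
  rw [sq3, Submodule.span_le]
  rintro x (⟨a, b, c, rfl⟩ | ⟨a, b, c, rfl⟩) <;>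
    simp only [SetLike.mem_coe, mem_ker, map_sub, thetaCore_tmul]
  · rw [mkS_comm ((b.1, 0) : V × W) ((a.1, 0) : V × W),
      mkS_comm ((0, b.2) : V × W) ((0, a.2) : V × W)]
    abel
  · rw [mkS_comm ((c.1, 0) : V × W) ((b.1, 0) : V × W),
      mkS_comm ((0, c.2) : V × W) ((0, b.2) : V × W)]
    abel

lemma symMul_qMap_apply (y : (V × W) ⊗[A] ((V × W) ⊗[A] (V × W))) :
    symMul A (qMap A V W y) = (Submodule.Quotient.mk y : SymCube A (V × W)) := by
  induction y using TensorProduct.induction_on with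
  | zero => simp
  | tmul m z => rw [qMap_tmul, symMul_tmul]
  | add x y hx hy => rw [map_add, map_add, hx, hy, Submodule.Quotient.mk_add]

lemma psi1_phi1 : Psi1 A V W ∘ₗ Phi1 A V W = LinearMap.id := by
  apply tensor_ext3
  intro v v' w
  simp [Phi1_tmul, Psi1_tmul]

lemma psi2_phi1 : Psi2 A V W ∘ₗ Phi1 A V W = 0 := by
  apply tensor_ext3
  intro v v' w
  simp [Phi1_tmul, Psi2_tmul, psi2Core_tmul]

lemma psi1_phi2 : Psi1 A V W ∘ₗ Phi2 A V W = 0 := by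
  apply tensor_ext3
  intro v w w'
  simp [Phi2_tmul, Psi1_tmul]

lemma psi2_phi2 : Psi2 A V W ∘ₗ Phi2 A V W = LinearMap.id := by
  apply tensor_ext3
  intro v w w'
  simp [Phi2_tmul, Psi2_tmul, psi2Core_tmul]

lemma symMul_phi1 : symMul A ∘ₗ Phi1 A V W = 0 := by
  apply tensor_ext3
  intro v v' w
  simp only [comp_apply, Phi1_tmul, map_sub, symMul_tmul, LinearMap.zero_apply]
  rw [mk3_swap23 ((v, 0) : V × W) ((v', 0) : V × W) ((0, w) : V × W),
    mk3_swap12 ((v, 0) : V × W) ((0, w) : V × W) ((v', 0) : V × W)]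
  abel

lemma symMul_phi2 : symMul A ∘ₗ Phi2 A V W = 0 := by
  apply tensor_ext3
  intro v w w'
  simp only [comp_apply, Phi2_tmul, map_sub, symMul_tmul, LinearMap.zero_apply]
  rw [mk3_swap12 ((v, 0) : V × W) ((0, w) : V × W) ((0, w') : V × W)]
  abel

/-- The abstract cross-effect map. -/
noncomputable def eMap : (V × W) ⊗[A] SymSq A (V × W) →ₗ[A] (V × W) ⊗[A] SymSq A (V × W) :=
  ambMap (prj1 A V W + prj2 A V W) - ambMap (prj1 A V W) - ambMap (prj2 A V W)

noncomputable def Phi : (V ⊗[A] (V ⊗[A] W)) × (V ⊗[A] (W ⊗[A] W)) →ₗ[A]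
    (V × W) ⊗[A] SymSq A (V × W) :=
  LinearMap.coprod (Phi1 A V W) (Phi2 A V W)

noncomputable def Psi : (V × W) ⊗[A] SymSq A (V × W) →ₗ[A]
    (V ⊗[A] (V ⊗[A] W)) × (V ⊗[A] (W ⊗[A] W)) :=
  LinearMap.prod (Psi1 A V W) (Psi2 A V W)

lemma ambMap_mk (p : (V × W) →ₗ[A] V × W) (m a b : V × W) :
    ambMap p (m ⊗ₜ[A] (Submodule.Quotient.mk (a ⊗ₜ[A] b) : SymSq A (V × W))) =
      p m ⊗ₜ[A] (Submodule.Quotient.mk (p a ⊗ₜ[A] p b)) := rfl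

lemma prjsum_apply (x : V × W) : (prj1 A V W + prj2 A V W) x = x := by
  cases x with
  | mk v w => simp [prj1, prj2]

lemma key_identity :
    eMap A V W ∘ₗ qMap A V W =
      (Phi A V W ∘ₗ Psi A V W) ∘ₗ qMap A V W + thetaCore A V W := by
  apply tensor_ext3
  intro m₁ m₂ m₃
  obtain ⟨v₁, w₁⟩ := m₁
  obtain ⟨v₂, w₂⟩ := m₂
  obtain ⟨v₃, w₃⟩ := m₃
  simp only [comp_apply, LinearMap.add_apply, qMap_tmul, eMap, LinearMap.sub_apply, ambMap_mk,
    thetaCore_tmul, Phi, Psi, prod_apply, Function.prod, coprod_apply,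
    Psi1_tmul, Psi2_tmul, psi2Core_tmul, prj1, prj2, inl_apply, inr_apply,
    fst_apply, snd_apply, map_add, map_neg, tmul_add, add_tmul, tmul_neg,
    map_sub, Phi1_tmul, Phi2_tmul, Submodule.Quotient.mk_add]
  rw [mkS_comm ((0, w₂) : V × W) ((v₃, 0) : V × W)]
  abel

lemma psi_phi (t : (V ⊗[A] (V ⊗[A] W)) × (V ⊗[A] (W ⊗[A] W))) :
    Psi A V W (Phi A V W t) = t := by
  obtain ⟨x, y⟩ := t
  have h11 := LinearMap.congr_fun (psi1_phi1 A V W) x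
  have h21 := LinearMap.congr_fun (psi2_phi1 A V W) x
  have h12 := LinearMap.congr_fun (psi1_phi2 A V W) y
  have h22 := LinearMap.congr_fun (psi2_phi2 A V W) y
  simp only [comp_apply, id_apply, LinearMap.zero_apply] at h11 h21 h12 h22
  simp [Phi, Psi, map_add, h11, h21, h12, h22]

lemma symMul_phi (t : (V ⊗[A] (V ⊗[A] W)) × (V ⊗[A] (W ⊗[A] W))) :
    symMul A (Phi A V W t) = 0 := by
  obtain ⟨x, y⟩ := t
  have h1 := LinearMap.congr_fun (symMul_phi1 A V W) x
  have h2 := LinearMap.congr_fun (symMul_phi2 A V W) y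
  simp only [comp_apply, LinearMap.zero_apply] at h1 h2
  simp [Phi, map_add, h1, h2]

lemma eMap_eq_phi_psi (x : (V × W) ⊗[A] SymSq A (V × W)) (hx : symMul A x = 0) :
    eMap A V W x = Phi A V W (Psi A V W x) := by
  obtain ⟨y, rfl⟩ : ∃ y, qMap A V W y = x :=
    LinearMap.lTensor_surjective (V × W) (Submodule.mkQ_surjective (sq2 A (V × W))) x
  have h0 : (Submodule.Quotient.mk y : SymCube A (V × W)) = 0 := by
    rw [← symMul_qMap_apply A V W y, hx]
  have hy : y ∈ sq3 A (V × W) := (Submodule.Quotient.mk_eq_zero _).1 h0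
  have h := LinearMap.congr_fun (key_identity A V W) y
  simp only [comp_apply, LinearMap.add_apply] at h
  rw [h, thetaCore_ker A V W hy, add_zero]

lemma cr2_eq_range : cr2SchurL31 A V W = LinearMap.range (Phi A V W) := by
  apply le_antisymm
  · rintro _ ⟨y, hy, rfl⟩
    have hy' : symMul A y = 0 := hy
    exact ⟨Psi A V W y, (eMap_eq_phi_psi A V W y hy').symm⟩
  · rintro _ ⟨t, rfl⟩
    refine ⟨Phi A V W t, ?_, ?_⟩
    · exact LinearMap.mem_ker.2 (symMul_phi A V W t)
    · show eMap A V W (Phi A V W t) = Phi A V W t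
      rw [eMap_eq_phi_psi A V W _ (symMul_phi A V W t), psi_phi]

end Cr2Proof

/-- for finitely generated projective modules `V`, `W` over a commutative
ring `A`, the second cross-effect of the Schur functor `L³₁` (where
`L³₁(V) = ker (V ⊗ Sym² V → Sym³ V)`) satisfies
`cr₂(L³₁)(V, W) ≅ (V ⊗ V ⊗ W) ⊕ (V ⊗ W ⊗ W)`. -/
theorem cr2_schurL31_iso (A V W : Type*) [CommRing A]
    [AddCommGroup V] [Module A V] [Module.Finite A V] [Module.Projective A V]
    [AddCommGroup W] [Module A W] [Module.Finite A W] [Module.Projective A W] :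
    Nonempty ((cr2SchurL31 A V W) ≃ₗ[A]
      (V ⊗[A] (V ⊗[A] W)) × (V ⊗[A] (W ⊗[A] W))) := by
  have hinj : Function.Injective (Phi A V W) :=
    Function.LeftInverse.injective (psi_phi A V W)
  exact ⟨(LinearEquiv.ofEq _ _ (cr2_eq_range A V W)).trans
    (LinearEquiv.ofInjective (Phi A V W) hinj).symm⟩
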